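/- Let X be a topological space equipped with cell data (P, ε, σ ↦ U_σ) satisfying (P1) and (P2), and let F be a sheaf of abelian groups on X such that for every x ∈ X and every i ≥ 1 the cohomology H^i(K•(P_x, F_x)) vanishes, where F_x denotes the stalk of F at x. Then the reduced Čech cohomology of the Godement sheaf I_F vanishes in positive degrees: Ȟ^i_P(I_F) = 0 for all i ≥ 1. (This is Lemma 3.7 of the paper, with the paper's condition (P4) rendered in its precise cochain-level form.) -/

import Mathlib

open CategoryTheory TopologicalSpace Opposite Function

universe u

/-- Cell data on a topological space `X`: a type of cells with a partial order and
dimension function, an incidence function satisfying the axioms of an incidence function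
on a cell complex, and an order-reversing assignment of open sets covering `X`
(conditions (P1) and (P2)). -/
structure CellData (X : Type u) [TopologicalSpace X] : Type (u + 1) where
  /-- the type of cells -/
  P : Type u
  /-- the partial order on cells -/
  [po : PartialOrder P]
  /-- the dimension of each cell -/
  dim : P → ℕ
  /-- the incidence function -/
  eps : P → P → ℤ
  /-- axiom (i): for fixed `σ'` only finitely many `σ` have `eps σ σ' ≠ 0` -/
  eps_finite : ∀ σ' : P, {σ : P | eps σ σ' ≠ 0}.Finite
  /-- axiom (ii): `eps σ σ' = 0` unless `σ < σ'` and `dim σ' = dim σ + 1` -/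
  eps_eq_zero : ∀ σ σ' : P, ¬(σ < σ' ∧ dim σ' = dim σ + 1) → eps σ σ' = 0
  /-- axiom (iii) -/
  eps_comp : ∀ σ σ'' : P, dim σ'' = dim σ + 2 →
    (∑ᶠ σ' : P, eps σ σ' * eps σ' σ'') = 0
  /-- the open set attached to each cell -/
  U : P → Opens X
  /-- condition (P1): the assignment is order reversing -/
  mono : ∀ {σ σ' : P}, σ ≤ σ' → U σ' ≤ U σ
  /-- condition (P2): the open sets cover `X` -/
  covers : ∀ x : X, ∃ σ : P, x ∈ U σ

attribute [instance] CellData.po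

namespace CellData

variable {X : TopCat.{u}} (D : CellData ↥X)

/-- The cells of dimension `i`. -/
abbrev Cells (i : ℕ) : Type u := {σ : D.P // D.dim σ = i}

variable (F : TopCat.Presheaf Ab.{u} X)

/-- The `i`-th term of the reduced Čech complex of the presheaf `F`:
the product of the sections of `F` over the `U σ` for `σ` of dimension `i`. -/
abbrev cochain (i : ℕ) : Type u := ∀ σ : D.Cells i, ↥(F.obj (op (D.U σ.1)))

open scoped Classical in
/-- For a pair of cells, `eps σ σ'` times the restriction map from `U σ` to `U σ'`
(interpreted as `0` unless `σ ≤ σ'`). -/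
noncomputable def pairMap (σ σ' : D.P) :
    ↥(F.obj (op (D.U σ))) →+ ↥(F.obj (op (D.U σ'))) :=
  D.eps σ σ' • (if h : σ ≤ σ' then ((F.map (homOfLE (D.mono h)).op).hom : _ →+ _) else 0)

lemma support_pairMap_finite {i : ℕ} (σ' : D.Cells (i + 1)) (f : D.cochain F i) :
    (Function.support fun σ : D.Cells i => D.pairMap F σ.1 σ'.1 (f σ)).Finite := by
  apply Set.Finite.subset ((D.eps_finite σ'.1).preimage (Set.injOn_of_injective Subtype.val_injective))
  intro σ hσ
  simp only [Function.mem_support] at hσ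
  simp only [Set.mem_preimage, Set.mem_setOf_eq]
  intro hz
  apply hσ
  simp [pairMap, hz]

/-- The differential of the reduced Čech complex. -/
noncomputable def cechDiff (i : ℕ) : D.cochain F i →+ D.cochain F (i + 1) :=
  AddMonoidHom.mk'
    (fun f σ' => ∑ᶠ σ : D.Cells i, D.pairMap F σ.1 σ'.1 (f σ))
    (by
      intro f g
      funext σ'
      have : ∀ σ : D.Cells i, D.pairMap F σ.1 σ'.1 ((f + g) σ)
          = D.pairMap F σ.1 σ'.1 (f σ) + D.pairMap F σ.1 σ'.1 (g σ) := by
        intro σ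
        rw [Pi.add_apply, map_add]
      show (∑ᶠ σ : D.Cells i, D.pairMap F σ.1 σ'.1 ((f + g) σ)) = _
      rw [finsum_congr this,
        finsum_add_distrib (D.support_pairMap_finite F σ' f) (D.support_pairMap_finite F σ' g)]
      rfl)

/-- The cocycles of the reduced Čech complex. -/
noncomputable def cechCocycles (i : ℕ) : AddSubgroup (D.cochain F i) :=
  (D.cechDiff F i).ker

/-- The coboundaries of the reduced Čech complex. -/
noncomputable def cechCoboundaries : (i : ℕ) → AddSubgroup (D.cochain F i)
  | 0 => ⊥
  | (j + 1) => (D.cechDiff F j).range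

/-- The `i`-th reduced Čech cohomology group `Ȟ^i_P(F)`. -/
noncomputable def reducedCechCohomology (i : ℕ) : Type u :=
  ↥(D.cechCocycles F i) ⧸
    ((D.cechCoboundaries F i).addSubgroupOf (D.cechCocycles F i))

noncomputable instance (i : ℕ) : AddCommGroup (D.reducedCechCohomology F i) :=
  QuotientAddGroup.Quotient.addCommGroup _

end CellData

namespace CellData

variable {X : TopCat.{u}} (D : CellData ↥X)

/-- For `x : X`, the cells `σ` of dimension `i` with `x ∈ U σ` (the `i`-cells of `P ₓ`). -/
abbrev KCells (x : ↥X) (i : ℕ) : Type u := {σ : D.P // x ∈ D.U σ ∧ D.dim σ = i}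

/-- The `i`-th term of the complex `K^•(Pₓ, A)`. -/
abbrev KCochain (x : ↥X) (A : Type u) [AddCommGroup A] (i : ℕ) : Type u :=
  D.KCells x i → A

/-- The differential of the complex `K^•(Pₓ, A)`. -/
noncomputable def KDiffFun (x : ↥X) (A : Type u) [AddCommGroup A] (i : ℕ)
    (f : D.KCochain x A i) : D.KCochain x A (i + 1) :=
  fun σ' => ∑ᶠ σ : D.KCells x i, D.eps σ.1 σ'.1 • f σ

/-- Condition (P3'): for every point `x` and every abelian group `A`, the map sending
`a : A` to the constant family in `K⁰(Pₓ, A)` is injective with image exactly the kernel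
of the differential `K⁰(Pₓ, A) → K¹(Pₓ, A)`. -/
def CondP3 : Prop :=
  ∀ (x : ↥X) (A : Type u) [AddCommGroup A],
    Function.Injective (fun (a : A) (_ : D.KCells x 0) => a) ∧
      Set.range (fun (a : A) (_ : D.KCells x 0) => a) =
        {f : D.KCochain x A 0 | D.KDiffFun x A 0 f = 0}

/-- Condition (P4'): for every point `x`, every abelian group `A` and every `i ≥ 1`, the
cohomology of the complex `K^•(Pₓ, A)` in degree `i` vanishes; i.e., every cocycle in
degree `i = j + 1` is a coboundary. -/
def CondP4 : Prop :=
  ∀ (x : ↥X) (A : Type u) [AddCommGroup A] (j : ℕ)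
    (f : D.KCochain x A (j + 1)), D.KDiffFun x A (j + 1) f = 0 →
      ∃ g : D.KCochain x A j, D.KDiffFun x A j g = f

end CellData


namespace CellData

variable {X : TopCat.{u}} (D : CellData ↥X)

lemma finsum_reindex {M : Type*} {α β : Type*} [AddCommMonoid M] (g : β → α)
    (hg : Function.Injective g) (t : α → M) (ht : ∀ a, t a ≠ 0 → a ∈ Set.range g) :
    ∑ᶠ a, t a = ∑ᶠ b, t (g b) := by
  rw [← finsum_mem_univ, finsum_mem_inter_support_eq' t Set.univ (Set.range g)
    (fun a ha => by simpa using ht a ha), finsum_mem_range hg]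

lemma pairMap_apply_of_le (F : TopCat.Presheaf Ab.{u} X) {σ σ' : D.P} (h : σ ≤ σ')
    (s : ↥(F.obj (op (D.U σ)))) :
    D.pairMap F σ σ' s = D.eps σ σ' • (F.map (homOfLE (D.mono h)).op s) := by
  classical
  rw [pairMap, dif_pos h]
  rfl

lemma evalDiff (I F : TopCat.Sheaf Ab.{u} X)
    (e : ∀ U : Opens ↥X, ↥(I.val.obj (op U)) ≃+ ∀ x : ↥U, ↥((TopCat.Presheaf.stalk F.val x.1)))
    (he : ∀ (V U : Opens ↥X) (h : V ≤ U) (s : ↥(I.val.obj (op U))) (x : ↥V),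
      e V (I.val.map (homOfLE h).op s) x = e U s ⟨x.1, h x.2⟩)
    (m : ℕ) (c : D.cochain I.val m) (σ' : D.Cells (m + 1)) (x : ↥X) (hx : x ∈ D.U σ'.1) :
    e (D.U σ'.1) ((D.cechDiff I.val m c) σ') ⟨x, hx⟩
      = D.KDiffFun x ↥(TopCat.Presheaf.stalk F.val x) m
          (fun σ => e (D.U σ.1) (c ⟨σ.1, σ.2.2⟩) ⟨x, σ.2.1⟩) ⟨σ'.1, hx, σ'.2⟩ := by
  classical
  set φ : ↥(I.val.obj (op (D.U σ'.1))) →+ ↥(TopCat.Presheaf.stalk F.val x) :=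
    (Pi.evalAddMonoidHom _ (⟨x, hx⟩ : ↥(D.U σ'.1))).comp (e (D.U σ'.1)).toAddMonoidHom with hφ
  have h1 : e (D.U σ'.1) ((D.cechDiff I.val m c) σ') ⟨x, hx⟩
      = φ (∑ᶠ σ : D.Cells m, D.pairMap I.val σ.1 σ'.1 (c σ)) := rfl
  rw [h1, AddMonoidHom.map_finsum φ (D.support_pairMap_finite I.val σ' c)]
  have key : ∀ σ : D.Cells m, φ (D.pairMap I.val σ.1 σ'.1 (c σ))
      = D.eps σ.1 σ'.1 • (if h : x ∈ D.U σ.1 then e (D.U σ.1) (c σ) ⟨x, h⟩ else 0) := by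
    intro σ
    by_cases hz : D.eps σ.1 σ'.1 = 0
    · simp [pairMap, hz]
    · have hlt : σ.1 < σ'.1 ∧ D.dim σ'.1 = D.dim σ.1 + 1 := by
        by_contra hcon
        exact hz (D.eps_eq_zero _ _ hcon)
      have hle : σ.1 ≤ σ'.1 := le_of_lt hlt.1
      have hxσ : x ∈ D.U σ.1 := D.mono hle hx
      rw [dif_pos hxσ, D.pairMap_apply_of_le I.val hle, map_zsmul]
      congr 1
      have h2 : φ (((I.val.map (homOfLE (D.mono hle)).op).hom : _ →+ _) (c σ))
          = e (D.U σ'.1) (I.val.map (homOfLE (D.mono hle)).op (c σ)) ⟨x, hx⟩ := rfl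
      rw [h2, he (D.U σ'.1) (D.U σ.1) (D.mono hle) (c σ) ⟨x, hx⟩]
  rw [finsum_congr key]
  have hrei := finsum_reindex (M := ↥(TopCat.Presheaf.stalk F.val x))
    (fun τ : D.KCells x m => (⟨τ.1, τ.2.2⟩ : D.Cells m))
    (by intro τ₁ τ₂ h; simp only [Subtype.mk.injEq] at h; exact Subtype.ext h)
    (fun σ : D.Cells m =>
      D.eps σ.1 σ'.1 • (if h : x ∈ D.U σ.1 then e (D.U σ.1) (c σ) ⟨x, h⟩ else 0))
    (by
      intro a ha
      by_cases hxa : x ∈ D.U a.1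
      · exact ⟨⟨a.1, hxa, a.2⟩, rfl⟩
      · exact absurd (by simp only [dif_neg hxa, smul_zero]) ha)
  rw [hrei]
  have hK : D.KDiffFun x ↥(TopCat.Presheaf.stalk F.val x) m
      (fun σ => e (D.U σ.1) (c ⟨σ.1, σ.2.2⟩) ⟨x, σ.2.1⟩) ⟨σ'.1, hx, σ'.2⟩
      = ∑ᶠ σ : D.KCells x m, D.eps σ.1 σ'.1 • e (D.U σ.1) (c ⟨σ.1, σ.2.2⟩) ⟨x, σ.2.1⟩ := rfl
  rw [hK]
  refine finsum_congr fun τ => ?_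
  simp only [dif_pos τ.2.1]

end CellData

/-- Lemma 3.7: let `X` carry cell data satisfying (P1), (P2), let `F` be a
sheaf of abelian groups on `X` such that for every point `x` the cohomology of the
complex `K^•(Pₓ, Fₓ)` with coefficients in the stalk `Fₓ` vanishes in all degrees `≥ 1`
(the cochain-level form of condition (P4)).  Let `I` be the Godement sheaf of `F`, i.e. a
sheaf whose sections over each open `U` are identified with `∏_{x ∈ U} Fₓ`, compatibly
with restriction (restriction corresponding to projection).  Then the reduced Čech
cohomology of `I` vanishes in all degrees `≥ 1`. -/
theorem stmt2 (X : TopCat.{u}) (D : CellData ↥X)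
    (F : TopCat.Sheaf Ab.{u} X)
    (hP4stalk : ∀ (x : ↥X) (j : ℕ) (f : D.KCochain x ↥((TopCat.Presheaf.stalk F.val x)) (j + 1)),
      D.KDiffFun x ↥((TopCat.Presheaf.stalk F.val x)) (j + 1) f = 0 →
        ∃ g : D.KCochain x ↥((TopCat.Presheaf.stalk F.val x)) j, D.KDiffFun x ↥((TopCat.Presheaf.stalk F.val x)) j g = f)
    (I : TopCat.Sheaf Ab.{u} X)
    (e : ∀ U : Opens ↥X, ↥(I.val.obj (op U)) ≃+ ∀ x : ↥U, ↥((TopCat.Presheaf.stalk F.val x.1)))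
    (he : ∀ (V U : Opens ↥X) (h : V ≤ U) (s : ↥(I.val.obj (op U))) (x : ↥V),
      e V (I.val.map (homOfLE h).op s) x = e U s ⟨x.1, h x.2⟩)
    (i : ℕ) (hi : 1 ≤ i) :
    Subsingleton (D.reducedCechCohomology I.val i) := by
  obtain ⟨j, rfl⟩ : ∃ j, i = j + 1 := ⟨i - 1, (Nat.succ_pred_eq_of_pos hi).symm⟩
  have htop : (D.cechCoboundaries I.val (j + 1)).addSubgroupOf
      (D.cechCocycles I.val (j + 1)) = ⊤ := by
    rw [AddSubgroup.eq_top_iff']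
    rintro ⟨c, hc⟩
    rw [AddSubgroup.mem_addSubgroupOf]
    have hc' : D.cechDiff I.val (j + 1) c = 0 := hc
    have hfx : ∀ x : ↥X, D.KDiffFun x ↥(TopCat.Presheaf.stalk F.val x) (j + 1)
        (fun σ => e (D.U σ.1) (c ⟨σ.1, σ.2.2⟩) ⟨x, σ.2.1⟩) = 0 := by
      intro x
      funext σ''
      have h := (D.evalDiff I F e he (j + 1) c ⟨σ''.1, σ''.2.2⟩ x σ''.2.1).symm
      rw [hc'] at h
      simpa using h
    choose g hg using fun x : ↥X =>
      hP4stalk x j (fun σ => e (D.U σ.1) (c ⟨σ.1, σ.2.2⟩) ⟨x, σ.2.1⟩) (hfx x)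
    set b : D.cochain I.val j :=
      fun σ => (e (D.U σ.1)).symm (fun xv => g xv.1 ⟨σ.1, xv.2, σ.2⟩) with hb
    have hdb : D.cechDiff I.val j b = c := by
      funext σ'
      apply (e (D.U σ'.1)).injective
      funext xv
      obtain ⟨x, hx⟩ := xv
      rw [D.evalDiff I F e he j b σ' x hx]
      have hinner : (fun σ : D.KCells x j =>
          e (D.U σ.1) (b ⟨σ.1, σ.2.2⟩) ⟨x, σ.2.1⟩) = g x := by
        funext σ
        show (e (D.U σ.1)) ((e (D.U σ.1)).symm
          (fun xv => g xv.1 ⟨σ.1, xv.2, σ.2.2⟩)) ⟨x, σ.2.1⟩ = g x σ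
        rw [AddEquiv.apply_symm_apply]
      rw [hinner, hg x]
    show c ∈ (D.cechDiff I.val j).range
    exact ⟨b, hdb⟩
  show Subsingleton (_ ⧸ (D.cechCoboundaries I.val (j + 1)).addSubgroupOf
    (D.cechCocycles I.val (j + 1)))
  rw [htop]
  exact QuotientAddGroup.subsingleton_quotient_top
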